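/- Suppose a finite group G acts on a compact path-connected space X fixing a point pt ∈ X. Then the short exact sequence of G-modules 0 → C(X,ℝ)/Z → C(X,U(1)) → H¹(X;Z) → 0 (arising from the exponential sequence) splits as G-modules. -/

import Mathlib

/-- The multiplicative group structure that `M ≃+ M` (= `AddAut M`) carried in the older
Mathlib (`AddAut.group`): `g * h = h.trans g`, `1 = refl`, `g⁻¹ = g.symm`. -/
instance addEquivSelfGroupOld (M : Type*) [Add M] : Group (M ≃+ M) where
  mul g h := AddEquiv.trans h g
  one := AddEquiv.refl _
  inv := AddEquiv.symm
  mul_assoc _ _ _ := rfl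
  one_mul _ := rfl
  mul_one _ := rfl
  inv_mul_cancel := AddEquiv.self_trans_symm

namespace Stmt3Aux

variable {X : Type} [TopologicalSpace X]

/-- A continuous integer-valued real function on a preconnected space is constant. -/
theorem int_valued_eq [PreconnectedSpace X] (V : C(X, ℝ))
    (h : ∀ x, ∃ k : ℤ, (k : ℝ) = V x) (x y : X) : V x = V y := by
  choose k hk using h
  have hlc : IsLocallyConstant k := by
    rw [IsLocallyConstant.iff_eventually_eq]
    intro z
    have h1 : ∀ᶠ w in nhds z, |V w - V z| < 1 := by
      have hc : Continuous fun w => |V w - V z| := (V.continuous.sub continuous_const).abs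
      apply (hc.tendsto z).eventually_lt_const
      simp
    filter_upwards [h1] with w hw
    have h2 : |(k w : ℝ) - (k z : ℝ)| < 1 := by rw [hk w, hk z]; exact hw
    have h3 : |k w - k z| < 1 := by exact_mod_cast h2
    have h4 := abs_lt.mp h3
    omega
  have := hlc.apply_eq_of_preconnectedSpace x y
  rw [← hk x, ← hk y, this]

/-- Reduction of a continuous real function mod `ℤ`, as an additive hom. -/
noncomputable def toCir : C(X, ℝ) →+ C(X, AddCircle (1 : ℝ)) where
  toFun F := ⟨fun x => (F x : AddCircle (1 : ℝ)),
    (AddCircle.continuous_mk' 1).comp F.continuous⟩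
  map_zero' := by ext x; simp
  map_add' F F' := by ext x; simp; rfl

@[simp] lemma toCir_apply (F : C(X, ℝ)) (x : X) :
    toCir F x = (F x : AddCircle (1 : ℝ)) := rfl

/-- Precomposition by a continuous map, as an additive hom. -/
noncomputable def cmp (φ : C(X, X)) :
    C(X, AddCircle (1 : ℝ)) →+ C(X, AddCircle (1 : ℝ)) where
  toFun f := f.comp φ
  map_zero' := rfl
  map_add' f f' := rfl

@[simp] lemma cmp_apply (φ : C(X, X)) (f : C(X, AddCircle (1 : ℝ))) (x : X) :
    cmp φ f x = f (φ x) := rfl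

end Stmt3Aux

open Stmt3Aux

/-- Let a finite group `G` act continuously on a compact path-connected
space `X`, fixing a point `pt`.  Consider the exact sequence of `G`-modules
`0 → C(X,ℝ)/ℤ → C(X,U(1)) → H¹(X;ℤ) → 0` arising from the exponential sequence: here
`U(1) = ℝ/ℤ`, the `G`-action on functions is pullback (`g • f = f ∘ (g⁻¹ • ·)`), `M` plays the
role of `H¹(X;ℤ)` (a free abelian group of finite rank, with `G`-action `σM`), the map
`π : C(X,U(1)) → M` is `G`-equivariant and surjective, and its kernel consists exactly of the
circle-valued functions which lift to real-valued continuous functions (i.e. the image of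
`C(X,ℝ)`, whose quotient by the constants `ℤ` is the kernel).  Then the sequence splits as
`G`-modules: there is a `G`-equivariant additive section `s` of `π`. -/
theorem stmt3 (G X : Type) [Group G] [Finite G] [TopologicalSpace X] [CompactSpace X]
    [PathConnectedSpace X] [MulAction G X]
    (hcont : ∀ g : G, Continuous fun x : X => g • x)
    (pt : X) (hpt : ∀ g : G, g • pt = pt)
    (M : Type) [AddCommGroup M] [Module.Free ℤ M] [Module.Finite ℤ M]
    (σM : G →* (M ≃+ M))
    (π : C(X, AddCircle (1 : ℝ)) →+ M)
    (hsurj : Function.Surjective π)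
    (hker : ∀ f : C(X, AddCircle (1 : ℝ)),
      π f = 0 ↔ ∃ F : C(X, ℝ), ∀ x, f x = (F x : AddCircle (1 : ℝ)))
    (hequiv : ∀ (g : G) (f : C(X, AddCircle (1 : ℝ))),
      π (f.comp ⟨fun x => g⁻¹ • x, hcont g⁻¹⟩) = σM g (π f)) :
    ∃ s : M →+ C(X, AddCircle (1 : ℝ)),
      (∀ m, π (s m) = m) ∧
      ∀ (g : G) (m : M), (s m).comp ⟨fun x => g⁻¹ • x, hcont g⁻¹⟩ = s (σM g m) := by
  classical
  cases nonempty_fintype G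
  -- the pullback action on circle-valued functions
  set ρ : G → (C(X, AddCircle (1 : ℝ)) →+ C(X, AddCircle (1 : ℝ))) :=
    fun g => cmp ⟨fun x => g⁻¹ • x, hcont g⁻¹⟩ with hρ
  have hρeval : ∀ (g : G) (f : C(X, AddCircle (1 : ℝ))) (x : X), ρ g f x = f (g⁻¹ • x) :=
    fun g f x => rfl
  have hρπ : ∀ (g : G) (f : C(X, AddCircle (1 : ℝ))), π (ρ g f) = σM g (π f) :=
    fun g f => hequiv g f
  have hρcomp : ∀ (h g : G) (f : C(X, AddCircle (1 : ℝ))), ρ h (ρ g f) = ρ (h * g) f := by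
    intro h g f
    ext x
    simp only [hρeval]
    rw [mul_inv_rev, mul_smul]
  -- constants are in the kernel of π
  have hπconst : ∀ a : AddCircle (1 : ℝ), π (ContinuousMap.const X a) = 0 := by
    intro a
    obtain ⟨r, rfl⟩ : ∃ r : ℝ, (r : AddCircle (1 : ℝ)) = a := QuotientAddGroup.mk_surjective a
    exact (hker _).mpr ⟨ContinuousMap.const X r, fun x => rfl⟩
  -- a set-theoretic (additive) section, normalized to vanish at pt
  obtain ⟨s₀', hs₀'⟩ := Module.projective_lifting_property π.toIntLinearMap
    (LinearMap.id (M := M)) hsurj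
  have hπs₀' : ∀ m, π (s₀' m) = m := fun m => LinearMap.congr_fun hs₀' m
  set s₀ : M →+ C(X, AddCircle (1 : ℝ)) :=
    { toFun := fun m => s₀' m - ContinuousMap.const X (s₀' m pt)
      map_zero' := by ext x; simp
      map_add' := by
        intro a b
        ext x
        simp [add_sub_add_comm] } with hs₀def
  have hπs₀ : ∀ m, π (s₀ m) = m := by
    intro m
    show π (s₀' m - ContinuousMap.const X (s₀' m pt)) = m
    rw [map_sub, hπconst, sub_zero, hπs₀']
  have hs₀pt : ∀ m, s₀ m pt = 0 := by
    intro m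
    show (s₀' m - ContinuousMap.const X (s₀' m pt)) pt = 0
    simp
  -- the averaged (transfer) map t, with π ∘ t = card G • id
  set n : ℕ := Fintype.card G with hn
  have hn0 : (n : ℝ) ≠ 0 := Nat.cast_ne_zero.mpr Fintype.card_ne_zero
  set t : M →+ C(X, AddCircle (1 : ℝ)) :=
    ∑ g : G, (ρ g).comp (s₀.comp (σM g⁻¹).toAddMonoidHom) with ht
  have htapply : ∀ m, t m = ∑ g : G, ρ g (s₀ (σM g⁻¹ m)) := by
    intro m
    rw [ht, AddMonoidHom.finset_sum_apply]
    rfl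
  have hσinv : ∀ (g : G) (m : M), σM g (σM g⁻¹ m) = m := by
    intro g m
    rw [show σM g (σM g⁻¹ m) = (σM g * σM g⁻¹) m from rfl, ← map_mul, mul_inv_cancel, map_one]
    rfl
  have hπt : ∀ m, π (t m) = n • m := by
    intro m
    rw [htapply, map_sum]
    have : ∀ g : G, π (ρ g (s₀ (σM g⁻¹ m))) = m := by
      intro g
      rw [hρπ, hπs₀, hσinv]
    rw [Finset.sum_congr rfl fun g _ => this g, Finset.sum_const, Finset.card_univ]
  have htpt : ∀ m, t m pt = 0 := by
    intro m
    rw [htapply]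
    have : (∑ g : G, ρ g (s₀ (σM g⁻¹ m))) pt = ∑ g : G, (ρ g (s₀ (σM g⁻¹ m))) pt := by
      simp
    rw [this]
    apply Finset.sum_eq_zero
    intro g _
    rw [hρeval, hpt, hs₀pt]
  have htequiv : ∀ (h : G) (m : M), ρ h (t m) = t (σM h m) := by
    intro h m
    rw [htapply, htapply, map_sum]
    refine Fintype.sum_equiv (Equiv.mulLeft h) _ _ ?_
    intro g
    rw [hρcomp]
    congr 1
    show s₀ (σM g⁻¹ m) = s₀ (σM (h * g)⁻¹ (σM h m))
    congr 1
    rw [show σM (h * g)⁻¹ (σM h m) = (σM (h * g)⁻¹ * σM h) m from rfl, ← map_mul, mul_inv_rev,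
      inv_mul_cancel_right]
  -- normalized lifts of kernel elements vanishing at pt
  have hlift : ∀ f : C(X, AddCircle (1 : ℝ)), π f = 0 → f pt = 0 →
      ∃ F : C(X, ℝ), F pt = 0 ∧ ∀ x, f x = (F x : AddCircle (1 : ℝ)) := by
    intro f hf hfpt
    obtain ⟨F', hF'⟩ := (hker f).mp hf
    have h0 : ((F' pt : ℝ) : AddCircle (1 : ℝ)) = 0 := by rw [← hF', hfpt]
    obtain ⟨k, hk⟩ := (AddCircle.coe_eq_zero_iff _).mp h0
    refine ⟨F' - ContinuousMap.const X (F' pt), by simp, ?_⟩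
    intro x
    rw [hF']
    show ((F' x : ℝ) : AddCircle (1 : ℝ)) = ((F' x - F' pt : ℝ) : AddCircle (1 : ℝ))
    rw [AddCircle.coe_sub]
    rw [← hk]
    have hz : ((k • (1 : ℝ) : ℝ) : AddCircle (1 : ℝ)) = 0 :=
      (AddCircle.coe_eq_zero_iff _).mpr ⟨k, rfl⟩
    rw [hz, sub_zero]
  -- extension on a basis of the lift of t - n • s₀
  set b := Module.Free.chooseBasis ℤ M with hb
  have hDex : ∀ i, ∃ F : C(X, ℝ), F pt = 0 ∧
      ∀ x, (t (b i) - n • s₀ (b i)) x = (F x : AddCircle (1 : ℝ)) := by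
    intro i
    apply hlift
    · rw [map_sub, hπt, map_nsmul, hπs₀, sub_self]
    · show t (b i) pt - (n • s₀ (b i)) pt = 0
      have : (n • s₀ (b i)) pt = n • (s₀ (b i) pt) := by simp
      rw [htpt, this, hs₀pt, smul_zero, sub_zero]
  choose F hFpt hFeq using hDex
  set D : M →ₗ[ℤ] C(X, ℝ) := Module.Basis.constr b ℤ F with hD
  -- two additive homs agreeing on the basis agree
  have hext : ∀ {N : Type} [AddCommGroup N] (φ ψ : M →+ N),
      (∀ i, φ (b i) = ψ (b i)) → ∀ m, φ m = ψ m := by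
    intro N _ φ ψ hφψ m
    have : φ.toIntLinearMap = ψ.toIntLinearMap := Module.Basis.ext b hφψ
    exact LinearMap.congr_fun this m
  -- D agrees with (a lift of) t - n • s₀, and vanishes at pt
  have hDb : ∀ i, D (b i) = F i := fun i => b.constr_basis ℤ F i
  have hDeq : ∀ m, toCir (D m) = t m - n • s₀ m := by
    refine hext (toCir.comp D.toAddMonoidHom) (t - n • s₀) ?_
    intro i
    show toCir (D (b i)) = (t - n • s₀) (b i)
    have : (t - n • s₀) (b i) = t (b i) - n • s₀ (b i) := by
      simp [AddMonoidHom.sub_apply]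
    rw [this, hDb]
    ext x
    rw [toCir_apply, hFeq i x]
  have hDpt : ∀ m, D m pt = 0 := by
    refine hext
      { toFun := fun m => D m pt
        map_zero' := by simp
        map_add' := by
          intro a c
          show D (a + c) pt = D a pt + D c pt
          rw [map_add]
          simp } (0 : M →+ ℝ) ?_
    intro i
    show D (b i) pt = 0
    rw [hDb, hFpt]
  -- the equivariant section s = s₀ + (1/n) D
  set E : M →+ C(X, ℝ) :=
    { toFun := fun m => (n : ℝ)⁻¹ • D m
      map_zero' := by simp
      map_add' := by
        intro a c
        show (n : ℝ)⁻¹ • D (a + c) = (n : ℝ)⁻¹ • D a + (n : ℝ)⁻¹ • D c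
        rw [map_add, smul_add] } with hE
  have hEapply : ∀ m, E m = (n : ℝ)⁻¹ • D m := fun m => rfl
  set s : M →+ C(X, AddCircle (1 : ℝ)) := s₀ + toCir.comp E with hs
  have hsapply : ∀ m, s m = s₀ m + toCir (E m) := fun m => rfl
  have hπE : ∀ m, π (toCir (E m)) = 0 := fun m => (hker _).mpr ⟨E m, fun x => rfl⟩
  have hπs : ∀ m, π (s m) = m := by
    intro m
    rw [hsapply, map_add, hπs₀, hπE, add_zero]
  have hspt : ∀ m, s m pt = 0 := by
    intro m
    rw [hsapply]
    show s₀ m pt + toCir (E m) pt = 0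
    rw [hs₀pt, toCir_apply, hEapply]
    show (0 : AddCircle (1 : ℝ)) + (((n : ℝ)⁻¹ • D m) pt : ℝ) = 0
    rw [ContinuousMap.smul_apply, hDpt, smul_zero, zero_add]
    norm_num
  have hns : ∀ m, n • s m = t m := by
    intro m
    have hnE : n • E m = D m := by
      rw [hEapply, ← Nat.cast_smul_eq_nsmul ℝ, smul_smul, mul_inv_cancel₀ hn0, one_smul]
    rw [hsapply, smul_add, ← map_nsmul toCir, hnE, hDeq]
    abel
  -- equivariance of s
  refine ⟨s, hπs, ?_⟩
  intro g m
  show ρ g (s m) = s (σM g m)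
  set u : C(X, AddCircle (1 : ℝ)) := ρ g (s m) - s (σM g m) with hu
  have hπu : π u = 0 := by rw [hu, map_sub, hρπ, hπs, hπs, sub_self]
  have hnu : n • u = 0 := by
    rw [hu, smul_sub, ← map_nsmul (ρ g), hns, hns, htequiv, sub_self]
  have hupt : u pt = 0 := by
    rw [hu]
    show ρ g (s m) pt - s (σM g m) pt = 0
    rw [hρeval, hpt, hspt, hspt, sub_zero]
  obtain ⟨U, hU⟩ := (hker u).mp hπu
  have hUpt : ∃ k₀ : ℤ, (k₀ : ℝ) = U pt := by
    have : ((U pt : ℝ) : AddCircle (1 : ℝ)) = 0 := by rw [← hU, hupt]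
    obtain ⟨k₀, hk₀⟩ := (AddCircle.coe_eq_zero_iff _).mp this
    exact ⟨k₀, by rw [← hk₀]; simp⟩
  obtain ⟨k₀, hk₀⟩ := hUpt
  have hint : ∀ x, ∃ k : ℤ, (k : ℝ) = ((n : ℝ) • U) x := by
    intro x
    have h1 : n • u x = 0 := by
      have : (n • u) x = n • u x := by simp
      rw [← this, hnu]
      rfl
    have h2 : ((n • U x : ℝ) : AddCircle (1 : ℝ)) = 0 := by
      rw [← h1, hU]
      rw [AddCircle.coe_nsmul]
    obtain ⟨k, hk⟩ := (AddCircle.coe_eq_zero_iff _).mp h2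
    refine ⟨k, ?_⟩
    rw [ContinuousMap.smul_apply, ← Nat.cast_smul_eq_nsmul ℝ n (U x)] at *
    rw [← hk]; simp
  have hconst := int_valued_eq ((n : ℝ) • U) hint
  have hUx : ∀ x, U x = (k₀ : ℝ) := by
    intro x
    have h3 := hconst x pt
    rw [ContinuousMap.smul_apply, ContinuousMap.smul_apply] at h3
    have h3' : (n : ℝ) * U x = (n : ℝ) * U pt := by simpa [smul_eq_mul] using h3
    have h4 : U x = U pt := mul_left_cancel₀ hn0 h3'
    rw [h4, hk₀]
  have huzero : u = 0 := by
    ext x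
    rw [hU x, hUx x]
    show ((k₀ : ℝ) : AddCircle (1 : ℝ)) = 0
    exact (AddCircle.coe_eq_zero_iff _).mpr ⟨k₀, by simp⟩
  have := sub_eq_zero.mp (hu ▸ huzero)
  exact this
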